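/- arXiv:1312.2307 — 2 statements merged into one kernel-verified Lean document; each statement's English description precedes it below -/
import Mathlib

section
/- Under the hypotheses of the previous statements (tangency ⟨A_{ℓ,k}(z),z⟩=0, the sums (2/D_ℓ)Σ_k ⟨A_{ℓ,k}(x),A_{ℓ,k}(y)⟩ = 2cos θ γ_ℓ(cos θ) − sin²θ γ'_ℓ(cos θ) and (2/D_ℓ)Σ_k ⟨A_{ℓ,k}(x),y⟩⟨A_{ℓ,k}(y),x⟩ = −sin²θ γ_ℓ(cos θ)), one has (2/D_ℓ) Σ_k ⟨A_{ℓ,k}(x), N⟩⟨A_{ℓ,k}(y), N⟩ = cos θ γ_ℓ(cos θ) − sin²θ γ'_ℓ(cos θ), where N = (x×y)/sin θ. -/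
open Real
open scoped RealInnerProductSpace

lemma aux_cross (a0 a1 a2 b0 b1 b2 x0 x1 x2 y0 y1 y2 c : ℝ)
    (hx : x0^2+x1^2+x2^2 = 1) (hy : y0^2+y1^2+y2^2 = 1)
    (hc : c = x0*y0+x1*y1+x2*y2)
    (hA : a0*x0+a1*x1+a2*x2 = 0) (hB : b0*y0+b1*y1+b2*y2 = 0) :
    (a0*(x1*y2-x2*y1)+a1*(x2*y0-x0*y2)+a2*(x0*y1-x1*y0)) *
      (b0*(x1*y2-x2*y1)+b1*(x2*y0-x0*y2)+b2*(x0*y1-x1*y0))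
    = (1-c^2)*(a0*b0+a1*b1+a2*b2) + c*(a0*y0+a1*y1+a2*y2)*(b0*x0+b1*x1+b2*x2) := by
  subst hc
  linear_combination (a0*b0+a1*b1+a2*b2)*(y0^2+y1^2+y2^2)*hx + (a0*b0+a1*b1+a2*b2)*hy
    - ((b0*x0+b1*x1+b2*x2)*(y0^2+y1^2+y2^2) - (b0*y0+b1*y1+b2*y2)*(x0*y0+x1*y1+x2*y2))*hA
    - (a0*y0+a1*y1+a2*y2)*(x0^2+x1^2+x2^2)*hB

/-- Lemma 5.2, second identity: with tangency `⟪A_k,x⟫ = ⟪B_k,y⟫ = 0` and the sums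
`(2/D) Σ_k ⟪A_k,B_k⟫ = 2cos θ γ_ℓ(cos θ) − sin²θ γ'_ℓ(cos θ)` and
`(2/D) Σ_k ⟪A_k,y⟫⟪B_k,x⟫ = −sin²θ γ_ℓ(cos θ)`, one has
`(2/D) Σ_k ⟪A_k,N⟫⟪B_k,N⟫ = cos θ γ_ℓ(cos θ) − sin²θ γ'_ℓ(cos θ)`,
where `N = (x×y)/sin θ`. -/
theorem sum_normal_products (x y : EuclideanSpace ℝ (Fin 3))
    (hx : ‖x‖ = 1) (hy : ‖y‖ = 1) (hne : x ≠ y) (hne' : x ≠ -y)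
    (θ : ℝ) (hθ : θ ∈ Set.Ioo 0 π) (hcos : Real.cos θ = ⟪x, y⟫)
    (N : EuclideanSpace ℝ (Fin 3))
    (hN : N = (Real.sin θ)⁻¹ •
      (WithLp.toLp 2 ![x 1 * y 2 - x 2 * y 1, x 2 * y 0 - x 0 * y 2, x 0 * y 1 - x 1 * y 0] :
        EuclideanSpace ℝ (Fin 3)))
    (g g' : ℝ)  -- the values γ_ℓ(cos θ) and γ'_ℓ(cos θ)
    (D : ℕ) (hD : 0 < D)
    (A B : ℕ → EuclideanSpace ℝ (Fin 3))  -- A k = A_{ℓ,k}(x), B k = A_{ℓ,k}(y)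
    (htangA : ∀ k, ⟪A k, x⟫ = 0)
    (htangB : ∀ k, ⟪B k, y⟫ = 0)
    (hAB : (2 : ℝ) / D * ∑ k ∈ Finset.range D, ⟪A k, B k⟫
      = 2 * Real.cos θ * g - Real.sin θ ^ 2 * g')
    (hcross : (2 : ℝ) / D * ∑ k ∈ Finset.range D, ⟪A k, y⟫ * ⟪B k, x⟫
      = -(Real.sin θ ^ 2) * g) :
    (2 : ℝ) / D * ∑ k ∈ Finset.range D, ⟪A k, N⟫ * ⟪B k, N⟫
      = Real.cos θ * g - Real.sin θ ^ 2 * g' := by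
  have hs : Real.sin θ ≠ 0 :=
    ne_of_gt (Real.sin_pos_of_pos_of_lt_pi hθ.1 hθ.2)
  have hs2 : Real.sin θ ^ 2 = 1 - Real.cos θ ^ 2 := Real.sin_sq θ
  have hxx : (⟪x, x⟫ : ℝ) = 1 := by
    rw [real_inner_self_eq_norm_sq, hx]; norm_num
  have hyy : (⟪y, y⟫ : ℝ) = 1 := by
    rw [real_inner_self_eq_norm_sq, hy]; norm_num
  -- pointwise identity
  have key : ∀ k, ⟪A k, N⟫ * ⟪B k, N⟫
      = ⟪A k, B k⟫ + (Real.cos θ / Real.sin θ ^ 2) * (⟪A k, y⟫ * ⟪B k, x⟫) := by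
    intro k
    have hAx := htangA k
    have hBy := htangB k
    have hN0 : N 0 = (Real.sin θ)⁻¹ * (x 1 * y 2 - x 2 * y 1) := by
      rw [hN]; simp [PiLp.smul_apply]
    have hN1 : N 1 = (Real.sin θ)⁻¹ * (x 2 * y 0 - x 0 * y 2) := by
      rw [hN]; simp [PiLp.smul_apply]
    have hN2 : N 2 = (Real.sin θ)⁻¹ * (x 0 * y 1 - x 1 * y 0) := by
      rw [hN]; simp [PiLp.smul_apply]
    simp only [PiLp.inner_apply, RCLike.inner_apply, conj_trivial,
      Fin.sum_univ_three] at hAx hBy hcos hxx hyy ⊢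
    rw [hN0, hN1, hN2]
    have hxx' : x 0 ^ 2 + x 1 ^ 2 + x 2 ^ 2 = 1 := by linear_combination hxx
    have hyy' : y 0 ^ 2 + y 1 ^ 2 + y 2 ^ 2 = 1 := by linear_combination hyy
    have hid := aux_cross (A k 0) (A k 1) (A k 2) (B k 0) (B k 1) (B k 2)
      (x 0) (x 1) (x 2) (y 0) (y 1) (y 2) (Real.cos θ) hxx' hyy' (by linear_combination hcos)
      (by linear_combination hAx) (by linear_combination hBy)
    have hinv : Real.sin θ * (Real.sin θ)⁻¹ = 1 := mul_inv_cancel₀ hs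
    rw [div_eq_mul_inv, ← inv_pow]
    linear_combination ((Real.sin θ)⁻¹) ^ 2 * hid
      + (A k 0 * B k 0 + A k 1 * B k 1 + A k 2 * B k 2)
          * ((Real.sin θ)⁻¹ * Real.sin θ + 1) * hinv
      - ((Real.sin θ)⁻¹) ^ 2 * (A k 0 * B k 0 + A k 1 * B k 1 + A k 2 * B k 2) * hs2
  have h1 : ∑ k ∈ Finset.range D, ⟪A k, N⟫ * ⟪B k, N⟫
      = (∑ k ∈ Finset.range D, ⟪A k, B k⟫)
        + (Real.cos θ / Real.sin θ ^ 2) * ∑ k ∈ Finset.range D, ⟪A k, y⟫ * ⟪B k, x⟫ := by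
    rw [Finset.mul_sum, ← Finset.sum_add_distrib]
    exact Finset.sum_congr rfl fun k _ => key k
  have h2 : (2 : ℝ) / D * ∑ k ∈ Finset.range D, ⟪A k, N⟫ * ⟪B k, N⟫
      = (2 : ℝ) / D * ∑ k ∈ Finset.range D, ⟪A k, B k⟫
        + (Real.cos θ / Real.sin θ ^ 2) *
          ((2 : ℝ) / D * ∑ k ∈ Finset.range D, ⟪A k, y⟫ * ⟪B k, x⟫) := by
    rw [h1]; ring
  rw [h2, hAB, hcross]
  have hs2' : Real.sin θ ^ 2 ≠ 0 := pow_ne_zero 2 hs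
  field_simp
  ring
end

section
/- Let K > 0, α ∈ (0,2), and suppose G: (0,π) → ℝ is differentiable with lim_{θ→0⁺} (G(0)−G(θ))/θ^α = K G(0) and lim_{θ→0⁺} G'(θ)/θ^{α−1} = −α K G(0), where G(0) = 2c > 0. Then for σ²(θ) = 2ν + (2ν/c) cot²θ[G(0)−G(θ)] − (2ν/c) cot θ G'(θ), one has lim_{θ→0⁺} σ²(θ)/θ^{α−2} = 4ν K (1+α); in particular σ²(θ) → +∞ as θ → 0⁺. -/
open Real Filter Topology

/-- sin θ / θ → 1 as θ → 0⁺ -/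
lemma sin_div_tendsto_one' : Tendsto (fun θ : ℝ => Real.sin θ / θ) (𝓝[>] 0) (𝓝 1) := by
  have h := Real.hasDerivAt_sin 0
  rw [hasDerivAt_iff_tendsto_slope] at h
  have h2 : Tendsto (slope Real.sin 0) (𝓝[>] (0:ℝ)) (𝓝 (Real.cos 0)) :=
    h.mono_left (nhdsWithin_mono _ (fun x hx => ne_of_gt hx))
  simpa [slope_fun_def, Real.cos_zero, div_eq_inv_mul] using h2

/-- θ cot θ → 1 as θ → 0⁺ -/
lemma cot_mul_tendsto_one' :
    Tendsto (fun θ : ℝ => Real.cos θ / Real.sin θ * θ) (𝓝[>] 0) (𝓝 1) := by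
  have hcos : Tendsto (fun θ : ℝ => Real.cos θ) (𝓝[>] 0) (𝓝 1) := by
    simpa using (Real.continuous_cos.tendsto 0).mono_left nhdsWithin_le_nhds
  have hs : Tendsto (fun θ : ℝ => (Real.sin θ / θ)⁻¹) (𝓝[>] 0) (𝓝 1) := by
    simpa using sin_div_tendsto_one'.inv₀ (by norm_num)
  have hmul := hcos.mul hs
  have heq : ∀ᶠ θ in 𝓝[>] (0:ℝ),
      Real.cos θ * (Real.sin θ / θ)⁻¹ = Real.cos θ / Real.sin θ * θ := by
    filter_upwards [Ioo_mem_nhdsGT_of_mem (by constructor <;> [rfl; exact Real.pi_pos] :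
        (0:ℝ) ∈ Set.Ico 0 π)] with θ hθ
    have hsin : Real.sin θ ≠ 0 := ne_of_gt (Real.sin_pos_of_pos_of_lt_pi hθ.1 hθ.2)
    have hθ0 : θ ≠ 0 := ne_of_gt hθ.1
    field_simp
  simpa using (hmul.congr' heq)

/-- In the Hölder regime: if `(G(0)−G(θ))/θ^α → K G(0)` and `G'(θ)/θ^{α−1} → −αK G(0)`
as `θ → 0⁺`, with `G(0) = 2c > 0`, `K > 0` and `α ∈ (0,2)`, then
`σ²(θ) = 2ν + (2ν/c) cot²θ[G(0)−G(θ)] − (2ν/c) cot θ G'(θ)` satisfies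
`σ²(θ)/θ^{α−2} → 4νK(1+α)`; in particular `σ²(θ) → +∞` as `θ → 0⁺`. -/
theorem sigma_sq_holder_asymptotics (ν c K α : ℝ) (hν : 0 < ν) (hK : 0 < K)
    (hα : α ∈ Set.Ioo (0:ℝ) 2)
    (G G' : ℝ → ℝ)
    (hG'deriv : ∀ θ ∈ Set.Ioo (0:ℝ) π, HasDerivAt G (G' θ) θ)
    (hc : G 0 = 2 * c) (hcpos : 0 < c)
    (hlim1 : Tendsto (fun θ => (G 0 - G θ) / θ ^ α) (𝓝[>] 0) (𝓝 (K * G 0)))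
    (hlim2 : Tendsto (fun θ => G' θ / θ ^ (α - 1)) (𝓝[>] 0) (𝓝 (-(α * K * G 0))))
    (σsq : ℝ → ℝ)
    (hσ : ∀ θ, σsq θ = 2 * ν
      + (2 * ν / c) * (Real.cos θ / Real.sin θ) ^ 2 * (G 0 - G θ)
      - (2 * ν / c) * (Real.cos θ / Real.sin θ) * G' θ) :
    Tendsto (fun θ => σsq θ / θ ^ (α - 2)) (𝓝[>] 0) (𝓝 (4 * ν * K * (1 + α))) ∧
      Tendsto σsq (𝓝[>] 0) atTop := by
  obtain ⟨hα0, hα2⟩ := hα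
  -- θ^(2-α) → 0
  have h1 : Tendsto (fun θ : ℝ => θ ^ (2 - α)) (𝓝[>] 0) (𝓝 0) := by
    have := ((Real.continuousAt_rpow_const 0 (2 - α)
      (Or.inr (by linarith))).tendsto).mono_left (nhdsWithin_le_nhds (s := Set.Ioi (0:ℝ)))
    simpa [Real.zero_rpow (by linarith : (2:ℝ) - α ≠ 0)] using this
  have hcot := cot_mul_tendsto_one'
  -- main limit
  have hmain : Tendsto (fun θ => σsq θ / θ ^ (α - 2)) (𝓝[>] 0) (𝓝 (4 * ν * K * (1 + α))) := by
    have hf : Tendsto (fun θ : ℝ =>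
        2 * ν * θ ^ (2 - α)
        + (2 * ν / c) * (Real.cos θ / Real.sin θ * θ) ^ 2 * ((G 0 - G θ) / θ ^ α)
        - (2 * ν / c) * (Real.cos θ / Real.sin θ * θ) * (G' θ / θ ^ (α - 1)))
        (𝓝[>] 0)
        (𝓝 (2 * ν * 0 + (2 * ν / c) * 1 ^ 2 * (K * G 0)
            - (2 * ν / c) * 1 * (-(α * K * G 0)))) :=
      ((tendsto_const_nhds.mul h1).add
          ((tendsto_const_nhds.mul (hcot.pow 2)).mul hlim1)).sub
          ((tendsto_const_nhds.mul hcot).mul hlim2)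
    have hval : 2 * ν * 0 + (2 * ν / c) * 1 ^ 2 * (K * G 0)
        - (2 * ν / c) * 1 * (-(α * K * G 0)) = 4 * ν * K * (1 + α) := by
      rw [hc]; field_simp; ring
    rw [hval] at hf
    refine hf.congr' ?_
    filter_upwards [self_mem_nhdsWithin] with θ hθ
    have hθ0 : (0:ℝ) < θ := hθ
    have hθne : θ ≠ 0 := ne_of_gt hθ0
    have hαne : (θ:ℝ) ^ α ≠ 0 := ne_of_gt (Real.rpow_pos_of_pos hθ0 α)
    have hα1ne : (θ:ℝ) ^ (α - 1) ≠ 0 := ne_of_gt (Real.rpow_pos_of_pos hθ0 (α - 1))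
    have e1 : (θ:ℝ) ^ (2 - α) = θ ^ (2:ℕ) / θ ^ α := by
      rw [Real.rpow_sub hθ0, Real.rpow_two]
    have e2 : (θ:ℝ) ^ (2 - α) = θ / θ ^ (α - 1) := by
      rw [show (2:ℝ) - α = 1 - (α - 1) by ring, Real.rpow_sub hθ0, Real.rpow_one]
    have i1 : ((θ:ℝ) ^ α)⁻¹ = θ ^ (2 - α) / θ ^ (2:ℕ) := by
      rw [e1]; field_simp
    have i2 : ((θ:ℝ) ^ (α - 1))⁻¹ = θ ^ (2 - α) / θ := by
      rw [e2]; field_simp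
    rw [hσ θ]
    set u := Real.cos θ / Real.sin θ with hu
    rw [div_eq_mul_inv _ ((θ:ℝ) ^ (α - 2)), ← Real.rpow_neg hθ0.le,
      show -(α - 2) = 2 - α by ring]
    rw [div_eq_mul_inv (G 0 - G θ), div_eq_mul_inv (G' θ), i1, i2]
    field_simp
  refine ⟨hmain, ?_⟩
  -- θ^(α-2) → atTop
  have hatTop : Tendsto (fun θ : ℝ => θ ^ (α - 2)) (𝓝[>] 0) atTop := by
    have hpos : Tendsto (fun θ : ℝ => θ ^ (2 - α)) (𝓝[>] 0) (𝓝[>] 0) := by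
      rw [tendsto_nhdsWithin_iff]
      refine ⟨h1, ?_⟩
      filter_upwards [self_mem_nhdsWithin] with θ hθ
      exact Real.rpow_pos_of_pos hθ (2 - α)
    refine (tendsto_inv_nhdsGT_zero.comp hpos).congr' ?_
    filter_upwards [self_mem_nhdsWithin] with θ hθ
    simp only [Function.comp]
    rw [← Real.rpow_neg (le_of_lt hθ), show -(2 - α) = α - 2 by ring]
  have hposC : (0:ℝ) < 4 * ν * K * (1 + α) := by positivity
  refine (hmain.pos_mul_atTop hposC hatTop).congr' ?_
  filter_upwards [self_mem_nhdsWithin] with θ hθ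
  have hne : (θ:ℝ) ^ (α - 2) ≠ 0 := ne_of_gt (Real.rpow_pos_of_pos hθ (α - 2))
  exact div_mul_cancel₀ _ hne
end
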